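/- Let G be an extraction grammar in Chomsky Normal Form and d = σ1⋯σn a document. Define the grammar G_d with nonterminals A_{i,j} (1 ≤ i ≤ j ≤ n) and A_ε for each nonterminal A of G, and productions as follows: A_{i,i} → σ_i for each A → σ_i in G; A_ε → τ for each A → τ in G with τ ∈ Γ_X; A_ε → B_ε C_ε, A_{i,j} → B_{i,j} C_ε, A_{i,j} → B_ε C_{i,j} for each A → BC in G; and A_{i,j} → B_{i,i'} C_{i'+1,j} for each A → BC in G and i ≤ i' < j. Then for every nonterminal A of G and every ref-word r with clr(r) = σ_i⋯σ_j: A ⇒*_G r if and only if A_{i,j} ⇒*_{G_d} r. -/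

import Mathlib

/-- A variable operation: `(x, true)` is `⊢x` (open), `(x, false)` is `⊣x` (close). -/
abbrev VarOp (X : Type) : Type := X × Bool

/-- A ref-word: a word over the extended alphabet `Σ ∪ Γ_X`. -/
abbrev RefWord (T X : Type) : Type := List (T ⊕ VarOp X)

/-- The morphism `clr` erasing variable operations and fixing letters of `Σ`. -/
def clr {T X : Type} (r : RefWord T X) : List T :=
  r.filterMap (fun a => match a with | Sum.inl t => some t | Sum.inr _ => none)

/-- A ref-word is valid for `X`: each `⊢x` and `⊣x` occurs exactly once, `⊢x` before `⊣x`. -/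
def ValidRef {T X : Type} (r : RefWord T X) : Prop :=
  ∀ x : X, ∃ u v w : RefWord T X,
    r = u ++ Sum.inr (x, true) :: (v ++ Sum.inr (x, false) :: w) ∧
    ∀ b : Bool, Sum.inr (x, b) ∉ u ∧ Sum.inr (x, b) ∉ v ∧ Sum.inr (x, b) ∉ w

/-- `μ` is the `(X,d)`-mapping `μ^r` induced by the ref-word `r`. -/
def MappingOf {T X : Type} (r : RefWord T X) (μ : X → ℕ × ℕ) : Prop :=
  ∀ x : X, ∃ u v w : RefWord T X,
    r = u ++ Sum.inr (x, true) :: (v ++ Sum.inr (x, false) :: w) ∧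
    μ x = ((clr u).length + 1, (clr u).length + 1 + (clr v).length)

/-- The spanner defined by an extraction grammar (a CFG over `Σ ∪ Γ_X`). -/
def spanner {T X : Type} (G : ContextFreeGrammar (T ⊕ VarOp X)) (d : List T) :
    Set (X → ℕ × ℕ) :=
  {μ | ∃ r : RefWord T X, r ∈ G.language ∧ ValidRef r ∧ clr r = d ∧ MappingOf r μ}

/-- A spanner is context-free if it is definable by an extraction grammar. -/
def IsCFSpanner {T X : Type} (S : List T → Set (X → ℕ × ℕ)) : Prop :=
  ∃ G : ContextFreeGrammar.{0} (T ⊕ VarOp X), ∀ d : List T, S d = spanner G d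

/-- A grammar is in Chomsky Normal Form: every rule is `A → BC` or `A → a`. -/
def InCNF {U : Type} (G : ContextFreeGrammar U) : Prop :=
  ∀ r ∈ G.rules,
    (∃ B C : G.NT, r.output = [Symbol.nonterminal B, Symbol.nonterminal C]) ∨
    (∃ a : U, r.output = [Symbol.terminal a])

open Classical in
/-- The document-adjusted variants of a single CNF rule: `A_{i,i} → σ_i`, `A_ε → τ`,
`A_ε → B_ε C_ε`, `A_{i,j} → B_{i,j} C_ε`, `A_{i,j} → B_ε C_{i,j}`, and
`A_{i,j} → B_{i,i'} C_{i'+1,j}`.  The nonterminal `A_{i,j}` is encoded as `(A, some (i,j))`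
and `A_ε` as `(A, none)`. -/
noncomputable def adjustRule {T X : Type} (d : List T) (N : Type)
    (r : ContextFreeRule (T ⊕ VarOp X) N) :
    List (ContextFreeRule (T ⊕ VarOp X) (N × Option (ℕ × ℕ))) :=
  match r.output with
  | [Symbol.terminal (Sum.inl σ)] =>
      (List.range d.length).filterMap fun i0 =>
        if d[i0]? = some σ then
          some ⟨(r.input, some (i0 + 1, i0 + 1)), [Symbol.terminal (Sum.inl σ)]⟩
        else none
  | [Symbol.terminal (Sum.inr τ)] =>
      [⟨(r.input, none), [Symbol.terminal (Sum.inr τ)]⟩]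
  | [Symbol.nonterminal B, Symbol.nonterminal C] =>
      ⟨(r.input, none), [Symbol.nonterminal (B, none), Symbol.nonterminal (C, none)]⟩ ::
      (List.range d.length).flatMap fun i0 =>
        (List.range d.length).flatMap fun j0 =>
          if i0 ≤ j0 then
            ⟨(r.input, some (i0 + 1, j0 + 1)),
                [Symbol.nonterminal (B, some (i0 + 1, j0 + 1)), Symbol.nonterminal (C, none)]⟩ ::
            ⟨(r.input, some (i0 + 1, j0 + 1)),
                [Symbol.nonterminal (B, none), Symbol.nonterminal (C, some (i0 + 1, j0 + 1))]⟩ ::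
            ((List.range d.length).filterMap fun i' =>
              if i0 ≤ i' ∧ i' < j0 then
                some ⟨(r.input, some (i0 + 1, j0 + 1)),
                  [Symbol.nonterminal (B, some (i0 + 1, i' + 1)),
                   Symbol.nonterminal (C, some (i' + 2, j0 + 1))]⟩
              else none)
          else []
  | _ => []

open Classical in
/-- The grammar `G_d` obtained by adjusting the CNF extraction grammar `G` to the document `d`. -/
noncomputable def adjust {T X : Type} (G : ContextFreeGrammar.{0} (T ⊕ VarOp X)) (d : List T) :
    ContextFreeGrammar.{0} (T ⊕ VarOp X) where
  NT := G.NT × Option (ℕ × ℕ)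
  initial := (G.initial, some (1, d.length))
  rules := (G.rules.toList.flatMap (adjustRule d G.NT)).toFinset

namespace Stmt14Aux
open ContextFreeGrammar

variable {T : Type} {g : ContextFreeGrammar.{0} T}

lemma rewrites_split {N : Type} {r : ContextFreeRule T N} {u v w : List (Symbol T N)}
    (h : r.Rewrites (u ++ v) w) :
    (∃ u', r.Rewrites u u' ∧ w = u' ++ v) ∨ (∃ v', r.Rewrites v v' ∧ w = u ++ v') := by
  induction u generalizing w with
  | nil => exact Or.inr ⟨w, h, rfl⟩
  | cons x u ih =>
    cases h with
    | head s =>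
      exact Or.inl ⟨r.output ++ u, ContextFreeRule.Rewrites.head u, by simp⟩
    | cons _ hrs =>
      rcases ih hrs with ⟨u', h1, rfl⟩ | ⟨v', h1, rfl⟩
      · exact Or.inl ⟨x :: u', ContextFreeRule.Rewrites.cons x h1, rfl⟩
      · exact Or.inr ⟨v', h1, rfl⟩

lemma derives_split {s w : List (Symbol T g.NT)} (h : g.Derives s w) :
    ∀ u v, s = u ++ v →
      ∃ u' v', w = u' ++ v' ∧ g.Derives u u' ∧ g.Derives v v' := by
  induction h using Relation.ReflTransGen.head_induction_on with
  | refl => exact fun u v huv => ⟨u, v, huv, Derives.refl u, Derives.refl v⟩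
  | head hstep _ ih =>
    rintro u v rfl
    obtain ⟨rl, hrl, hrw⟩ := hstep
    rcases rewrites_split hrw with ⟨u', h1, rfl⟩ | ⟨v', h1, rfl⟩
    · obtain ⟨u'', v'', rfl, h2, h3⟩ := ih u' v rfl
      exact ⟨u'', v'', rfl, (Produces.single ⟨rl, hrl, h1⟩).trans h2, h3⟩
    · obtain ⟨u'', v'', rfl, h2, h3⟩ := ih u v' rfl
      exact ⟨u'', v'', rfl, h2, (Produces.single ⟨rl, hrl, h1⟩).trans h3⟩

lemma derives_of_terminals {w : List T} {v : List (Symbol T g.NT)}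
    (h : g.Derives (w.map Symbol.terminal) v) : v = w.map Symbol.terminal := by
  rcases h.eq_or_head with heq | ⟨z, ⟨rl, _, hrw⟩, _⟩
  · exact heq.symm
  · exfalso
    obtain ⟨p, q, hpq, -⟩ := hrw.exists_parts
    have : Symbol.nonterminal rl.input ∈ w.map (Symbol.terminal (N := g.NT)) := by
      rw [hpq]; simp
    simp [List.mem_map] at this

lemma cnf_produces_length (hCNF : InCNF g) {u v : List (Symbol T g.NT)}
    (h : g.Produces u v) : u.length ≤ v.length := by
  obtain ⟨rl, hrl, hrw⟩ := h
  obtain ⟨p, q, rfl, rfl⟩ := hrw.exists_parts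
  rcases hCNF rl hrl with ⟨B, C, ho⟩ | ⟨a, ho⟩ <;> simp [ho]

lemma cnf_derives_length (hCNF : InCNF g) {u v : List (Symbol T g.NT)}
    (h : g.Derives u v) : u.length ≤ v.length := by
  induction h with
  | refl => exact le_rfl
  | tail _ hp ih => exact ih.trans (cnf_produces_length hCNF hp)

lemma cnf_ne_nil (hCNF : InCNF g) {A : g.NT} {w : List T}
    (h : g.Derives [Symbol.nonterminal A] (w.map Symbol.terminal)) : w ≠ [] := by
  have := cnf_derives_length hCNF h
  simp at this
  rintro rfl
  simp at this

lemma derives_first_step {A : g.NT} {w : List T}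
    (h : g.Derives [Symbol.nonterminal A] (w.map Symbol.terminal)) :
    ∃ rl ∈ g.rules, rl.input = A ∧ g.Derives rl.output (w.map Symbol.terminal) := by
  rcases h.eq_or_head with heq | ⟨z, ⟨rl, hrl, hrw⟩, htail⟩
  · exfalso
    cases w with
    | nil => simp at heq
    | cons a w => simp at heq
  · obtain ⟨p, q, hpq, rfl⟩ := hrw.exists_parts
    cases p with
    | cons x p =>
      exfalso
      have := congrArg List.length hpq
      simp at this
    | nil =>
      simp at hpq
      obtain ⟨rfl, rfl⟩ := hpq
      exact ⟨rl, hrl, rfl, by simpa using htail⟩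

lemma map_terminal_eq_append {w : List T} {u v : List (Symbol T g.NT)}
    (h : w.map Symbol.terminal = u ++ v) :
    ∃ w1 w2, w = w1 ++ w2 ∧ u = w1.map Symbol.terminal ∧ v = w2.map Symbol.terminal := by
  rw [List.map_eq_append_iff] at h
  obtain ⟨w1, w2, rfl, rfl, rfl⟩ := h
  exact ⟨w1, w2, rfl, rfl, rfl⟩

lemma cnf_cases (hCNF : InCNF g) {A : g.NT} {w : List T}
    (h : g.Derives [Symbol.nonterminal A] (w.map Symbol.terminal)) :
    (∃ a, (⟨A, [Symbol.terminal a]⟩ : ContextFreeRule T g.NT) ∈ g.rules ∧ w = [a]) ∨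
    (∃ B C w1 w2,
      (⟨A, [Symbol.nonterminal B, Symbol.nonterminal C]⟩ : ContextFreeRule T g.NT) ∈ g.rules ∧
      w = w1 ++ w2 ∧ w1 ≠ [] ∧ w2 ≠ [] ∧
      g.Derives [Symbol.nonterminal B] (w1.map Symbol.terminal) ∧
      g.Derives [Symbol.nonterminal C] (w2.map Symbol.terminal)) := by
  obtain ⟨rl, hrl, hinp, hder⟩ := derives_first_step h
  obtain ⟨inp, out⟩ := rl
  simp only at hinp hder
  subst hinp
  rcases hCNF _ hrl with ⟨B, C, ho⟩ | ⟨a, ho⟩ <;> simp only at ho <;> subst ho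
  · right
    have : [Symbol.nonterminal B, Symbol.nonterminal C] =
        [Symbol.nonterminal B] ++ [Symbol.nonterminal (T := T) C] := rfl
    obtain ⟨u', v', hw, h1, h2⟩ := derives_split hder _ _ this
    obtain ⟨w1, w2, rfl, rfl, rfl⟩ := map_terminal_eq_append hw
    exact ⟨B, C, w1, w2, hrl, rfl, cnf_ne_nil hCNF h1, cnf_ne_nil hCNF h2, h1, h2⟩
  · left
    have h2 := derives_of_terminals (w := [a]) (by simpa using hder)
    have hw : w = [a] := by
      have hinj : Function.Injective (Symbol.terminal (N := g.NT) (T := T)) := by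
        intro x y hxy; injection hxy
      exact List.map_injective_iff.mpr hinj (by simpa using h2)
    exact ⟨a, hrl, hw⟩

lemma derives_pair {x y : Symbol T g.NT} {u v : List (Symbol T g.NT)}
    (hx : g.Derives [x] u) (hy : g.Derives [y] v) : g.Derives [x, y] (u ++ v) :=
  (hx.append_right [y]).trans (hy.append_left u)

end Stmt14Aux

namespace Stmt14Aux
open ContextFreeGrammar
variable {T X : Type}

/-- 0-based slice facts -/
lemma slice_length0 {d : List T} {a m : ℕ} (h : a + m ≤ d.length) :
    ((d.drop a).take m).length = m := by
  simp; omega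

lemma slice_split0 {d : List T} {a m k : ℕ} (hk : k ≤ m) :
    (d.drop a).take m = (d.drop a).take k ++ (d.drop (a + k)).take (m - k) := by
  conv_lhs => rw [show m = k + (m - k) by omega]
  rw [List.take_add]
  congr 1
  rw [List.drop_drop]

lemma slice_single {d : List T} {i0 : ℕ} {σ : T} (h : d[i0]? = some σ) :
    (d.drop i0).take 1 = [σ] := by
  rw [List.take_one, List.head?_drop, h]
  rfl

lemma clr_append (r1 r2 : RefWord T X) : clr (r1 ++ r2) = clr r1 ++ clr r2 :=
  List.filterMap_append ..

@[simp] lemma clr_inl (σ : T) : clr ([Sum.inl σ] : RefWord T X) = [σ] := rfl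
@[simp] lemma clr_inr (τ : VarOp X) : clr ([Sum.inr τ] : RefWord T X) = ([] : List T) := rfl

/-- correctness predicate for the annotation `o` -/
def Ok (d : List T) (o : Option (ℕ × ℕ)) (s : List T) : Prop :=
  match o with
  | none => s = []
  | some (i, j) => 1 ≤ i ∧ i ≤ j ∧ j ≤ d.length ∧ s = (d.drop (i - 1)).take (j - i + 1)

lemma ok_none {d s : List T} : Ok d none s ↔ s = [] := Iff.rfl

lemma ok_some {d s : List T} {i j : ℕ} :
    Ok d (some (i, j)) s ↔
      1 ≤ i ∧ i ≤ j ∧ j ≤ d.length ∧ s = (d.drop (i - 1)).take (j - i + 1) := Iff.rfl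

variable {G : ContextFreeGrammar.{0} (T ⊕ VarOp X)} {d : List T}

lemma mem_adjust {r' : ContextFreeRule (T ⊕ VarOp X) (G.NT × Option (ℕ × ℕ))} :
    r' ∈ (adjust G d).rules ↔ ∃ r0 ∈ G.rules, r' ∈ adjustRule d G.NT r0 := by
  classical
  show _ ∈ List.toFinset _ ↔ _
  rw [List.mem_toFinset]
  simp

lemma mem1 {A : G.NT} {σ : T} {i : ℕ} (hi : 1 ≤ i) (hile : i ≤ d.length)
    (hget : d[i - 1]? = some σ)
    (hr : (⟨A, [Symbol.terminal (Sum.inl σ)]⟩ : ContextFreeRule _ G.NT) ∈ G.rules) :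
    (⟨(A, some (i, i)), [Symbol.terminal (Sum.inl σ)]⟩ :
      ContextFreeRule (T ⊕ VarOp X) (G.NT × Option (ℕ × ℕ))) ∈ (adjust G d).rules := by
  rw [mem_adjust]
  refine ⟨_, hr, ?_⟩
  have h1 : i - 1 + 1 = i := by omega
  simp only [adjustRule]
  refine List.mem_filterMap.mpr ⟨i - 1, List.mem_range.mpr (by omega), ?_⟩
  rw [if_pos (by exact hget)]
  rw [h1]

lemma mem2 {A : G.NT} {τ : VarOp X}
    (hr : (⟨A, [Symbol.terminal (Sum.inr τ)]⟩ : ContextFreeRule _ G.NT) ∈ G.rules) :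
    (⟨(A, none), [Symbol.terminal (Sum.inr τ)]⟩ :
      ContextFreeRule (T ⊕ VarOp X) (G.NT × Option (ℕ × ℕ))) ∈ (adjust G d).rules := by
  rw [mem_adjust]
  exact ⟨_, hr, by simp [adjustRule]⟩

lemma mem3 {A B C : G.NT}
    (hr : (⟨A, [Symbol.nonterminal B, Symbol.nonterminal C]⟩ : ContextFreeRule _ G.NT)
      ∈ G.rules) :
    (⟨(A, none), [Symbol.nonterminal (B, none), Symbol.nonterminal (C, none)]⟩ :
      ContextFreeRule (T ⊕ VarOp X) (G.NT × Option (ℕ × ℕ))) ∈ (adjust G d).rules := by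
  rw [mem_adjust]
  exact ⟨_, hr, by simp [adjustRule]⟩

lemma mem4 {A B C : G.NT} {i j : ℕ} (hi : 1 ≤ i) (hij : i ≤ j) (hj : j ≤ d.length)
    (hr : (⟨A, [Symbol.nonterminal B, Symbol.nonterminal C]⟩ : ContextFreeRule _ G.NT)
      ∈ G.rules) :
    (⟨(A, some (i, j)),
        [Symbol.nonterminal (B, some (i, j)), Symbol.nonterminal (C, none)]⟩ :
      ContextFreeRule (T ⊕ VarOp X) (G.NT × Option (ℕ × ℕ))) ∈ (adjust G d).rules := by
  rw [mem_adjust]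
  refine ⟨_, hr, ?_⟩
  have h1 : i - 1 + 1 = i := by omega
  have h2 : j - 1 + 1 = j := by omega
  simp only [adjustRule, List.mem_cons]
  right
  refine List.mem_flatMap.mpr ⟨i - 1, List.mem_range.mpr (by omega), ?_⟩
  refine List.mem_flatMap.mpr ⟨j - 1, List.mem_range.mpr (by omega), ?_⟩
  rw [if_pos (by omega)]
  simp only [List.mem_cons]
  left
  rw [h1, h2]

lemma mem5 {A B C : G.NT} {i j : ℕ} (hi : 1 ≤ i) (hij : i ≤ j) (hj : j ≤ d.length)
    (hr : (⟨A, [Symbol.nonterminal B, Symbol.nonterminal C]⟩ : ContextFreeRule _ G.NT)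
      ∈ G.rules) :
    (⟨(A, some (i, j)),
        [Symbol.nonterminal (B, none), Symbol.nonterminal (C, some (i, j))]⟩ :
      ContextFreeRule (T ⊕ VarOp X) (G.NT × Option (ℕ × ℕ))) ∈ (adjust G d).rules := by
  rw [mem_adjust]
  refine ⟨_, hr, ?_⟩
  have h1 : i - 1 + 1 = i := by omega
  have h2 : j - 1 + 1 = j := by omega
  simp only [adjustRule, List.mem_cons]
  right
  refine List.mem_flatMap.mpr ⟨i - 1, List.mem_range.mpr (by omega), ?_⟩
  refine List.mem_flatMap.mpr ⟨j - 1, List.mem_range.mpr (by omega), ?_⟩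
  rw [if_pos (by omega)]
  simp only [List.mem_cons]
  right; left
  rw [h1, h2]

lemma mem6 {A B C : G.NT} {i i' j : ℕ} (hi : 1 ≤ i) (hii' : i ≤ i') (hi'j : i' < j)
    (hj : j ≤ d.length)
    (hr : (⟨A, [Symbol.nonterminal B, Symbol.nonterminal C]⟩ : ContextFreeRule _ G.NT)
      ∈ G.rules) :
    (⟨(A, some (i, j)),
        [Symbol.nonterminal (B, some (i, i')), Symbol.nonterminal (C, some (i' + 1, j))]⟩ :
      ContextFreeRule (T ⊕ VarOp X) (G.NT × Option (ℕ × ℕ))) ∈ (adjust G d).rules := by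
  rw [mem_adjust]
  refine ⟨_, hr, ?_⟩
  have h1 : i - 1 + 1 = i := by omega
  have h2 : j - 1 + 1 = j := by omega
  have h3 : i' - 1 + 1 = i' := by omega
  have h4 : i' - 1 + 2 = i' + 1 := by omega
  simp only [adjustRule, List.mem_cons]
  right
  refine List.mem_flatMap.mpr ⟨i - 1, List.mem_range.mpr (by omega), ?_⟩
  refine List.mem_flatMap.mpr ⟨j - 1, List.mem_range.mpr (by omega), ?_⟩
  rw [if_pos (by omega)]
  simp only [List.mem_cons]
  right; right
  refine List.mem_filterMap.mpr ⟨i' - 1, List.mem_range.mpr (by omega), ?_⟩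
  rw [if_pos (by omega)]
  rw [h1, h2, h3, h4]

lemma adjust_term_char (hCNF : InCNF G) {A : G.NT} {o : Option (ℕ × ℕ)} {a : T ⊕ VarOp X}
    (h : (⟨(A, o), [Symbol.terminal a]⟩ :
        ContextFreeRule (T ⊕ VarOp X) (G.NT × Option (ℕ × ℕ))) ∈ (adjust G d).rules) :
    (⟨A, [Symbol.terminal a]⟩ : ContextFreeRule _ G.NT) ∈ G.rules ∧
    ((∃ σ i0, a = Sum.inl σ ∧ i0 < d.length ∧ d[i0]? = some σ ∧ o = some (i0 + 1, i0 + 1)) ∨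
     (∃ τ, a = Sum.inr τ ∧ o = none)) := by
  rw [mem_adjust] at h
  obtain ⟨r0, hr0, hmem⟩ := h
  obtain ⟨inp, out⟩ := r0
  rcases hCNF _ hr0 with ⟨B, C, ho⟩ | ⟨b, ho⟩ <;> simp only at ho <;> subst ho
  · simp [adjustRule] at hmem
  · rcases b with σ | τ
    · simp [adjustRule] at hmem
      obtain ⟨i0, hi0, hget, ⟨rfl, ho⟩, ha⟩ := hmem
      subst ha
      exact ⟨hr0, Or.inl ⟨σ, i0, rfl, hi0, hget, ho.symm⟩⟩
    · simp [adjustRule] at hmem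
      obtain ⟨⟨rfl, rfl⟩, rfl⟩ := hmem
      exact ⟨hr0, Or.inr ⟨τ, rfl, rfl⟩⟩

lemma adjust_bin_char (hCNF : InCNF G) {A : G.NT} {o : Option (ℕ × ℕ)}
    {B' C' : G.NT × Option (ℕ × ℕ)}
    (h : (⟨(A, o), [Symbol.nonterminal B', Symbol.nonterminal C']⟩ :
        ContextFreeRule (T ⊕ VarOp X) (G.NT × Option (ℕ × ℕ))) ∈ (adjust G d).rules) :
    (⟨A, [Symbol.nonterminal B'.1, Symbol.nonterminal C'.1]⟩ : ContextFreeRule _ G.NT)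
      ∈ G.rules ∧
    ((o = none ∧ B'.2 = none ∧ C'.2 = none) ∨
     (∃ i0 j0, i0 ≤ j0 ∧ j0 < d.length ∧ o = some (i0 + 1, j0 + 1) ∧
       ((B'.2 = some (i0 + 1, j0 + 1) ∧ C'.2 = none) ∨
        (B'.2 = none ∧ C'.2 = some (i0 + 1, j0 + 1)) ∨
        (∃ i', i0 ≤ i' ∧ i' < j0 ∧
          B'.2 = some (i0 + 1, i' + 1) ∧ C'.2 = some (i' + 2, j0 + 1))))) := by
  rw [mem_adjust] at h
  obtain ⟨r0, hr0, hmem⟩ := h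
  obtain ⟨inp, out⟩ := r0
  rcases hCNF _ hr0 with ⟨B, C, ho⟩ | ⟨b, ho⟩ <;> simp only at ho <;> subst ho
  · simp [adjustRule] at hmem
    rcases hmem with ⟨⟨rfl, rfl⟩, rfl, rfl⟩ | ⟨i0, hi0, j0, hj0, hij, h⟩
    · exact ⟨hr0, Or.inl ⟨rfl, rfl, rfl⟩⟩
    · rcases h with ⟨⟨rfl, rfl⟩, rfl, rfl⟩ | ⟨⟨rfl, rfl⟩, rfl, rfl⟩ |
        ⟨i', hi'len, ⟨h1, h2⟩, ⟨rfl, ho⟩, hB, hC⟩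
      · exact ⟨hr0, Or.inr ⟨i0, j0, hij, hj0, rfl, Or.inl ⟨rfl, rfl⟩⟩⟩
      · exact ⟨hr0, Or.inr ⟨i0, j0, hij, hj0, rfl, Or.inr (Or.inl ⟨rfl, rfl⟩)⟩⟩
      · subst ho; rw [← hB, ← hC]
        exact ⟨hr0, Or.inr ⟨i0, j0, hij, hj0, rfl,
          Or.inr (Or.inr ⟨i', h1, h2, rfl, rfl⟩)⟩⟩
  · rcases b with σ | τ <;> simp [adjustRule] at hmem

lemma adjust_cnf (hCNF : InCNF G) : InCNF (adjust G d) := by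
  intro (r' : ContextFreeRule (T ⊕ VarOp X) (G.NT × Option (ℕ × ℕ))) hr'
  replace hr' := mem_adjust.mp hr'
  obtain ⟨r0, hr0, hmem⟩ := hr'
  obtain ⟨inp, out⟩ := r0
  rcases hCNF _ hr0 with ⟨B, C, ho⟩ | ⟨b, ho⟩ <;> simp only at ho <;> subst ho
  · simp [adjustRule] at hmem
    rcases hmem with rfl | ⟨i0, hi0, j0, hj0, hij, h⟩
    · left; exact ⟨_, _, rfl⟩
    · rcases h with rfl | rfl | ⟨i', hi'len, hi', heq⟩
      · left; exact ⟨_, _, rfl⟩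
      · left; exact ⟨_, _, rfl⟩
      · left; rw [← heq]; exact ⟨_, _, rfl⟩
  · rcases b with σ | τ <;> simp [adjustRule] at hmem
    · obtain ⟨i0, hi0, hget, heq⟩ := hmem
      right; rw [← heq]; exact ⟨_, rfl⟩
    · right; rw [hmem]; exact ⟨_, rfl⟩


lemma forward (hCNF : InCNF G) :
    ∀ n (r : RefWord T X), r.length ≤ n → ∀ (A : G.NT) (o : Option (ℕ × ℕ)),
      G.Derives [Symbol.nonterminal A] (r.map Symbol.terminal) → Ok d o (clr r) →
      (adjust G d).Derives [Symbol.nonterminal (A, o)] (r.map Symbol.terminal) := by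
  intro n
  induction n with
  | zero =>
    intro r hn A o hder _
    exact absurd (List.length_eq_zero_iff.mp (Nat.le_zero.mp hn)) (cnf_ne_nil hCNF hder)
  | succ n ih =>
    intro r hn A o hder hok
    rcases cnf_cases hCNF hder with ⟨a, hrl, rfl⟩ | ⟨B, C, r1, r2, hrl, rfl, hne1, hne2, h1, h2⟩
    · rcases a with σ | τ
      · rcases o with _ | ⟨i, j⟩
        · rw [ok_none] at hok; simp at hok
        · rw [ok_some] at hok
          obtain ⟨hi, hij, hj, hs⟩ := hok
          have hs' : [σ] = (d.drop (i - 1)).take (j - i + 1) := by simpa using hs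
          have hlen : j - i + 1 = 1 := by
            have hl := congrArg List.length hs'
            rw [slice_length0 (by omega)] at hl
            simpa using hl.symm
          have hget : d[i - 1]? = some σ := by
            have h2 : (d.drop (i - 1)).take (j - i + 1) = [σ] := hs'.symm
            rw [hlen, List.take_one, List.head?_drop] at h2
            cases hval : d[i - 1]? with
            | none => rw [hval] at h2; simp at h2
            | some x => rw [hval] at h2; simp at h2; rw [h2]
          have hji : j = i := by omega
          subst hji
          exact Produces.single
            ⟨_, mem1 hi (by omega) hget hrl, ContextFreeRule.Rewrites.input_output⟩
      · rcases o with _ | ⟨i, j⟩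
        · exact Produces.single ⟨_, mem2 hrl, ContextFreeRule.Rewrites.input_output⟩
        · exfalso
          rw [ok_some] at hok
          obtain ⟨hi, hij, hj, hs⟩ := hok
          have hl := congrArg List.length hs
          rw [slice_length0 (by omega)] at hl
          simp at hl
    · rw [List.length_append] at hn
      have hp1 : 0 < r1.length := List.length_pos_iff.mpr hne1
      have hp2 : 0 < r2.length := List.length_pos_iff.mpr hne2
      have hn1 : r1.length ≤ n := by omega
      have hn2 : r2.length ≤ n := by omega
      have hc : clr (r1 ++ r2) = clr r1 ++ clr r2 := clr_append r1 r2
      rcases o with _ | ⟨i, j⟩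
      · rw [ok_none, hc] at hok
        obtain ⟨e1, e2⟩ := List.append_eq_nil_iff.mp hok
        have d1 := ih r1 hn1 B none h1 (ok_none.mpr e1)
        have d2 := ih r2 hn2 C none h2 (ok_none.mpr e2)
        refine (Produces.single
          ⟨_, mem3 hrl, ContextFreeRule.Rewrites.input_output⟩).trans ?_
        rw [List.map_append]
        exact derives_pair d1 d2
      · rw [ok_some] at hok
        obtain ⟨hi, hij, hj, hs⟩ := hok
        rw [hc] at hs
        have hlen : (clr r1).length + (clr r2).length = j - i + 1 := by
          have hl := congrArg List.length hs
          rw [slice_length0 (by omega), List.length_append] at hl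
          exact hl
        by_cases hk0 : (clr r1).length = 0
        · have e1 : clr r1 = [] := List.length_eq_zero_iff.mp hk0
          have e2 : clr r2 = (d.drop (i - 1)).take (j - i + 1) := by
            rw [e1] at hs; simpa using hs
          have d1 := ih r1 hn1 B none h1 (ok_none.mpr e1)
          have d2 := ih r2 hn2 C (some (i, j)) h2 (ok_some.mpr ⟨hi, hij, hj, e2⟩)
          refine (Produces.single
            ⟨_, mem5 hi hij hj hrl, ContextFreeRule.Rewrites.input_output⟩).trans ?_
          rw [List.map_append]
          exact derives_pair d1 d2
        · by_cases hkf : (clr r1).length = j - i + 1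
          · have e2 : clr r2 = [] := List.length_eq_zero_iff.mp (by omega)
            have e1 : clr r1 = (d.drop (i - 1)).take (j - i + 1) := by
              rw [e2] at hs; simpa using hs
            have d1 := ih r1 hn1 B (some (i, j)) h1 (ok_some.mpr ⟨hi, hij, hj, e1⟩)
            have d2 := ih r2 hn2 C none h2 (ok_none.mpr e2)
            refine (Produces.single
              ⟨_, mem4 hi hij hj hrl, ContextFreeRule.Rewrites.input_output⟩).trans ?_
            rw [List.map_append]
            exact derives_pair d1 d2
          · obtain ⟨k, hk⟩ : ∃ k, (clr r1).length = k := ⟨_, rfl⟩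
            rw [hk] at hlen hk0 hkf
            have hk1 : 1 ≤ k := by omega
            have hk2 : k < j - i + 1 := by omega
            obtain ⟨i', hi'def⟩ : ∃ i', i + k - 1 = i' := ⟨_, rfl⟩
            have e1 : clr r1 = (d.drop (i - 1)).take (i' - i + 1) := by
              calc clr r1 = (clr r1 ++ clr r2).take k := (List.take_left' hk).symm
                _ = ((d.drop (i - 1)).take (j - i + 1)).take k := by rw [hs]
                _ = (d.drop (i - 1)).take (i' - i + 1) := by
                    rw [List.take_take, show min k (j - i + 1) = i' - i + 1 by omega]
            have e2 : clr r2 = (d.drop i').take (j - i') := by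
              calc clr r2 = (clr r1 ++ clr r2).drop k := (List.drop_left' hk).symm
                _ = ((d.drop (i - 1)).take (j - i + 1)).drop k := by rw [hs]
                _ = ((d.drop (i - 1)).drop k).take (j - i + 1 - k) := List.drop_take ..
                _ = (d.drop i').take (j - i') := by
                    rw [List.drop_drop, show i - 1 + k = i' by omega,
                      show j - i + 1 - k = j - i' by omega]
            have d1 := ih r1 hn1 B (some (i, i')) h1
              (ok_some.mpr ⟨hi, by omega, by omega, e1⟩)
            have d2 := ih r2 hn2 C (some (i' + 1, j)) h2
              (ok_some.mpr ⟨by omega, by omega, hj, by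
                rw [show i' + 1 - 1 = i' by omega, show j - (i' + 1) + 1 = j - i' by omega]
                exact e2⟩)
            refine (Produces.single
              ⟨_, mem6 (B := B) (C := C) (i := i) (i' := i') (j := j) hi (by omega) (by omega) hj hrl,
                ContextFreeRule.Rewrites.input_output⟩).trans ?_
            rw [List.map_append]
            exact derives_pair d1 d2

lemma backward (hCNF : InCNF G) :
    ∀ n (r : RefWord T X), r.length ≤ n → ∀ (A : G.NT) (o : Option (ℕ × ℕ)),
      (adjust G d).Derives [Symbol.nonterminal (A, o)] (r.map Symbol.terminal) →
      G.Derives [Symbol.nonterminal A] (r.map Symbol.terminal) ∧ Ok d o (clr r) := by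
  have hC2 : InCNF (adjust G d) := adjust_cnf hCNF
  intro n
  induction n with
  | zero =>
    intro r hn A o hder
    exact absurd (List.length_eq_zero_iff.mp (Nat.le_zero.mp hn)) (cnf_ne_nil hC2 hder)
  | succ n ih =>
    intro r hn A o hder
    rcases cnf_cases hC2 hder with ⟨a, hrl, rfl⟩ |
      ⟨B', C', r1, r2, hrl, rfl, hne1, hne2, h1, h2⟩
    · obtain ⟨hG, hcase⟩ := adjust_term_char hCNF hrl
      refine ⟨Produces.single ⟨_, hG, ContextFreeRule.Rewrites.input_output⟩, ?_⟩
      rcases hcase with ⟨σ, i0, rfl, hi0, hget, rfl⟩ | ⟨τ, rfl, rfl⟩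
      · rw [ok_some]
        refine ⟨by omega, le_rfl, by omega, ?_⟩
        rw [show i0 + 1 - 1 = i0 by omega, show i0 + 1 - (i0 + 1) + 1 = 1 by omega,
          slice_single hget]
        rfl
      · rw [ok_none]
        rfl
    · obtain ⟨hG, hcase⟩ := adjust_bin_char hCNF hrl
      obtain ⟨B, o1⟩ := B'
      obtain ⟨C, o2⟩ := C'
      simp only at hG hcase
      rw [List.length_append] at hn
      have hp1 : 0 < r1.length := List.length_pos_iff.mpr hne1
      have hp2 : 0 < r2.length := List.length_pos_iff.mpr hne2
      obtain ⟨g1, k1⟩ := ih r1 (by omega) B o1 h1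
      obtain ⟨g2, k2⟩ := ih r2 (by omega) C o2 h2
      refine ⟨(Produces.single
        ⟨_, hG, ContextFreeRule.Rewrites.input_output⟩).trans
          (by rw [List.map_append]; exact derives_pair g1 g2), ?_⟩
      rw [clr_append]
      rcases hcase with ⟨rfl, rfl, rfl⟩ | ⟨i0, j0, hij0, hj0, rfl, hsub⟩
      · rw [ok_none] at k1 k2 ⊢
        rw [k1, k2]
        rfl
      · rcases hsub with ⟨rfl, rfl⟩ | ⟨rfl, rfl⟩ | ⟨i', hii', hi'j, rfl, rfl⟩
        · rw [ok_some] at k1 ⊢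
          rw [ok_none] at k2
          obtain ⟨q1, q2, q3, e1⟩ := k1
          exact ⟨q1, q2, q3, by rw [e1, k2, List.append_nil]⟩
        · rw [ok_some] at k2 ⊢
          rw [ok_none] at k1
          obtain ⟨q1, q2, q3, e2⟩ := k2
          exact ⟨q1, q2, q3, by rw [e2, k1, List.nil_append]⟩
        · rw [ok_some] at k1 k2 ⊢
          obtain ⟨_, _, _, e1⟩ := k1
          obtain ⟨_, _, q3, e2⟩ := k2
          refine ⟨by omega, by omega, by omega, ?_⟩
          rw [e1, e2]
          rw [show i0 + 1 - 1 = i0 by omega,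
            show i' + 1 - (i0 + 1) + 1 = i' - i0 + 1 by omega,
            show i' + 2 - 1 = i' + 1 by omega,
            show j0 + 1 - (i' + 2) + 1 = j0 - i' by omega,
            show j0 + 1 - (i0 + 1) + 1 = j0 - i0 + 1 by omega]
          rw [slice_split0 (d := d) (a := i0) (k := i' - i0 + 1) (m := j0 - i0 + 1) (by omega)]
          rw [show i0 + (i' - i0 + 1) = i' + 1 by omega,
            show j0 - i0 + 1 - (i' - i0 + 1) = j0 - i' by omega]

end Stmt14Aux

/-- Correctness of the document adjustment: for `1 ≤ i ≤ j ≤ |d|` and every ref-word `r` with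
`clr r = σ_i ⋯ σ_j`, `A ⇒*_G r` iff `A_{i,j} ⇒*_{G_d} r`. -/
theorem stmt14 (T X : Type) (G : ContextFreeGrammar.{0} (T ⊕ VarOp X)) (hCNF : InCNF G)
    (d : List T) (A : G.NT) (i j : ℕ) (h1 : 1 ≤ i) (hij : i ≤ j) (hj : j ≤ d.length)
    (r : RefWord T X) (hr : clr r = (d.drop (i - 1)).take (j - i + 1)) :
    G.Derives [Symbol.nonterminal A] (r.map Symbol.terminal) ↔
    (adjust G d).Derives [Symbol.nonterminal (A, some (i, j))] (r.map Symbol.terminal) := by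
  constructor
  · intro h
    exact Stmt14Aux.forward hCNF r.length r le_rfl A (some (i, j)) h
      (Stmt14Aux.ok_some.mpr ⟨h1, hij, hj, hr⟩)
  · intro h
    exact (Stmt14Aux.backward hCNF r.length r le_rfl A (some (i, j)) h).1
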